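/- arXiv:2101.01609 — 3 statements merged into one kernel-verified Lean document; each statement's English description precedes it below -/
import Mathlib

section
/- Let I be a closed interval containing 0, let β ∈ (0,1], and let f : I → ℝ be continuously differentiable with f′ Hölder continuous of exponent β on I (f ∈ C^{1,β}(I)). Suppose f(x) = O(|x|^{β_0}) as |x| → 0 for some β_0 ≥ 1 + β, and let 1 < β_1 < β_0. Define h(x) := f(x)/|x|^{β_1} for x ≠ 0 and h(0) := 0. Then h is Hölder continuous on I of exponent β̄ := (β_0 − β_1)/(β_0 − β); i.e., there is C > 0 with |h(x) − h(y)| ≤ C|x − y|^{β̄} for all x, y ∈ I. -/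
set_option maxHeartbeats 1000000

open MeasureTheory Filter Asymptotics Topology


lemma aux_pow_le_max (t S e : ℝ) (ht : 0 ≤ t) (hts : t ≤ S) (he : 0 ≤ e) :
    t ^ e ≤ max 1 (S ^ e) := by
  rcases le_total t 1 with h | h
  · exact le_max_of_le_left (Real.rpow_le_one ht h he)
  · exact le_max_of_le_right (Real.rpow_le_rpow ht hts he)

lemma aux_rpow_sub_rpow (p u v : ℝ) (hp : 1 ≤ p) (hu : 0 < u) (huv : u ≤ v) :
    v ^ p - u ^ p ≤ p * v ^ (p - 1) * (v - u) := by
  have hconv : Convex ℝ (Set.Icc u v) := convex_Icc u v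
  have hd : ∀ x ∈ Set.Icc u v, HasDerivWithinAt (fun s : ℝ => s ^ p)
      (p * x ^ (p - 1)) (Set.Icc u v) x := fun x hx =>
    (Real.hasDerivAt_rpow_const (Or.inl (ne_of_gt (lt_of_lt_of_le hu hx.1)))).hasDerivWithinAt
  have hb : ∀ x ∈ Set.Icc u v, ‖p * x ^ (p - 1)‖ ≤ p * v ^ (p - 1) := by
    intro x hx
    have hx0 : 0 < x := lt_of_lt_of_le hu hx.1
    rw [Real.norm_eq_abs, abs_mul, abs_of_nonneg (by linarith : (0:ℝ) ≤ p),
      abs_of_nonneg (Real.rpow_nonneg hx0.le _)]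
    exact mul_le_mul_of_nonneg_left
      (Real.rpow_le_rpow hx0.le hx.2 (by linarith)) (by linarith)
  have := hconv.norm_image_sub_le_of_norm_hasDerivWithin_le hd hb
    (Set.left_mem_Icc.2 huv) (Set.right_mem_Icc.2 huv)
  rw [Real.norm_eq_abs, Real.norm_eq_abs] at this
  calc v ^ p - u ^ p ≤ |v ^ p - u ^ p| := le_abs_self _
    _ ≤ p * v ^ (p - 1) * |v - u| := this
    _ = p * v ^ (p - 1) * (v - u) := by rw [abs_of_nonneg (by linarith)]

/-- Hölder continuity of `h(x) = f(x)/|x|^{β₁}` for `f ∈ C^{1,β}(I)`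
with `f(x) = O(|x|^{β₀})` at `0`, where `β̄ = (β₀-β₁)/(β₀-β)`. -/
theorem holder_quotient_C1 (a b : ℝ) (ha : a ≤ 0) (hb : 0 ≤ b)
    (β β₀ β₁ : ℝ) (hβ : β ∈ Set.Ioc (0 : ℝ) 1) (hβ₀ : 1 + β ≤ β₀)
    (hβ₁ : 1 < β₁) (hβ₁' : β₁ < β₀)
    (f f' : ℝ → ℝ)
    (hderiv : ∀ x ∈ Set.Icc a b, HasDerivWithinAt f (f' x) (Set.Icc a b) x)
    (hcont : ContinuousOn f' (Set.Icc a b))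
    (hholder : ∃ C > 0, ∀ x ∈ Set.Icc a b, ∀ y ∈ Set.Icc a b,
      |f' x - f' y| ≤ C * |x - y| ^ β)
    (hO : f =O[nhdsWithin 0 (Set.Icc a b)] fun x : ℝ => |x| ^ β₀) :
    ∃ C > 0, ∀ x ∈ Set.Icc a b, ∀ y ∈ Set.Icc a b,
      |(if x = 0 then 0 else f x / |x| ^ β₁) - (if y = 0 then 0 else f y / |y| ^ β₁)|
        ≤ C * |x - y| ^ ((β₀ - β₁) / (β₀ - β)) := by
  rcases eq_or_lt_of_le (ha.trans hb) with hab | hab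
  · -- degenerate interval: a = 0 = b
    have hb0 : b = 0 := le_antisymm (hab ▸ ha) hb
    have ha0 : a = 0 := hab.trans hb0
    refine ⟨1, one_pos, ?_⟩
    intro x hx y hy
    rw [ha0, hb0] at hx hy
    have hx0 : x = 0 := le_antisymm hx.2 hx.1
    have hy0 : y = 0 := le_antisymm hy.2 hy.1
    subst hx0; subst hy0
    simp only [sub_self, abs_zero]
    positivity
  -- main case a < b
  obtain ⟨hβpos, hβle⟩ := hβ
  obtain ⟨CH, hCHpos, hCH⟩ := hholder
  have h0I : (0:ℝ) ∈ Set.Icc a b := ⟨ha, hb⟩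
  -- local O bound
  obtain ⟨c, hc⟩ := hO.bound
  rw [eventually_nhdsWithin_iff, Metric.eventually_nhds_iff] at hc
  obtain ⟨δ, hδpos, hδ⟩ := hc
  have hδ' : ∀ x ∈ Set.Icc a b, |x| < δ → |f x| ≤ c * |x| ^ β₀ := by
    intro x hx hxδ
    have := hδ (by simpa [Real.dist_eq] using hxδ) hx
    simpa [abs_of_nonneg (Real.rpow_nonneg (abs_nonneg x) β₀)] using this
  -- boundedness of f
  have hfc : ContinuousOn f (Set.Icc a b) := fun x hx => (hderiv x hx).continuousWithinAt
  obtain ⟨M, hM⟩ := (isCompact_Icc).exists_bound_of_continuousOn hfc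
  have hM0 : 0 ≤ M := le_trans (abs_nonneg _) (hM 0 h0I)
  -- global O bound
  set C₀ : ℝ := max c (M / δ ^ β₀) + 1 with hC₀def
  have hC₀pos : 0 < C₀ := by positivity
  have hC₀ : ∀ x ∈ Set.Icc a b, |f x| ≤ C₀ * |x| ^ β₀ := by
    intro x hx
    have hrn : (0:ℝ) ≤ |x| ^ β₀ := Real.rpow_nonneg (abs_nonneg x) β₀
    rcases lt_or_ge (|x|) δ with h | h
    · calc |f x| ≤ c * |x| ^ β₀ := hδ' x hx h
        _ ≤ C₀ * |x| ^ β₀ := by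
          apply mul_le_mul_of_nonneg_right _ hrn
          rw [hC₀def]
          have : c ≤ max c (M / δ ^ β₀) := le_max_left _ _
          linarith
    · have hδβ : (0:ℝ) < δ ^ β₀ := Real.rpow_pos_of_pos hδpos β₀
      have h1 : M / δ ^ β₀ * δ ^ β₀ = M := div_mul_cancel₀ M hδβ.ne'
      have h2 : δ ^ β₀ ≤ |x| ^ β₀ := Real.rpow_le_rpow hδpos.le h (by linarith)
      have h3 : 0 ≤ M / δ ^ β₀ := div_nonneg hM0 hδβ.le
      calc |f x| ≤ M := hM x hx
        _ = M / δ ^ β₀ * δ ^ β₀ := h1.symm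
        _ ≤ M / δ ^ β₀ * |x| ^ β₀ := mul_le_mul_of_nonneg_left h2 h3
        _ ≤ C₀ * |x| ^ β₀ := by
          apply mul_le_mul_of_nonneg_right _ hrn
          rw [hC₀def]
          have : M / δ ^ β₀ ≤ max c (M / δ ^ β₀) := le_max_right _ _
          linarith
  -- f 0 = 0
  have hf0 : f 0 = 0 := by
    have := hC₀ 0 h0I
    rw [abs_zero, Real.zero_rpow (by linarith : β₀ ≠ 0), mul_zero] at this
    exact abs_eq_zero.mp (le_antisymm this (abs_nonneg _))
  -- key Taylor estimate
  have hEst : ∀ x ∈ Set.Icc a b, |f x - f' 0 * x| ≤ CH * |x| ^ β * |x| := by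
    intro x hx
    have hsub : Set.uIcc 0 x ⊆ Set.Icc a b := Set.uIcc_subset_Icc h0I hx
    have habs : ∀ t ∈ Set.uIcc 0 x, |t| ≤ |x| := by
      intro t ht
      rw [Set.mem_uIcc] at ht
      rcases ht with ⟨h1, h2⟩ | ⟨h1, h2⟩
      · rw [abs_of_nonneg h1]; exact h2.trans (le_abs_self x)
      · rw [abs_of_nonpos h2]; exact (neg_le_neg h1).trans (neg_le_abs x)
    have hd : ∀ t ∈ Set.uIcc 0 x, HasDerivWithinAt (fun s => f s - f' 0 * s)
        (f' t - f' 0) (Set.uIcc 0 x) t := by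
      intro t ht
      have h1 : HasDerivWithinAt f (f' t) (Set.uIcc 0 x) t :=
        (hderiv t (hsub ht)).mono hsub
      have h2 : HasDerivWithinAt (fun s : ℝ => f' 0 * s) (f' 0) (Set.uIcc 0 x) t := by
        simpa using ((hasDerivAt_id t).const_mul (f' 0)).hasDerivWithinAt
      exact h1.sub h2
    have hbd : ∀ t ∈ Set.uIcc 0 x, ‖f' t - f' 0‖ ≤ CH * |x| ^ β := by
      intro t ht
      calc ‖f' t - f' 0‖ ≤ CH * |t - 0| ^ β := hCH t (hsub ht) 0 h0I
        _ ≤ CH * |x| ^ β := by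
          rw [sub_zero]
          exact mul_le_mul_of_nonneg_left
            (Real.rpow_le_rpow (abs_nonneg t) (habs t ht) hβpos.le) hCHpos.le
    have := (convex_uIcc (0:ℝ) x).norm_image_sub_le_of_norm_hasDerivWithin_le hd hbd
      Set.left_mem_uIcc Set.right_mem_uIcc
    simpa [hf0, Real.norm_eq_abs] using this
  -- f' 0 = 0
  have hf'0 : f' 0 = 0 := by
    -- choose a nonzero endpoint
    obtain ⟨c0, hc0ne, hc0I⟩ : ∃ c0 : ℝ, c0 ≠ 0 ∧ ∀ n : ℕ, c0 / (n + 1) ∈ Set.Icc a b := by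
      rcases lt_or_ge 0 b with hbpos | hble
      · refine ⟨b, hbpos.ne', fun n => ?_⟩
        have hn : (0:ℝ) < (n:ℝ) + 1 := by positivity
        constructor
        · exact le_trans ha (by positivity)
        · rw [div_le_iff₀ hn]; nlinarith
      · have hb0 : b = 0 := le_antisymm hble hb
        have hapos : a < 0 := by linarith
        refine ⟨a, hapos.ne, fun n => ?_⟩
        have hn : (0:ℝ) < (n:ℝ) + 1 := by positivity
        constructor
        · rw [le_div_iff₀ hn]; nlinarith
        · rw [hb0]
          exact div_nonpos_of_nonpos_of_nonneg hapos.le hn.le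
    -- the bound for each n
    have hbound : ∀ n : ℕ, |f' 0| ≤ C₀ * (|c0| * (1/(n+1))) ^ (β₀ - 1) + CH * (|c0| * (1/(n+1))) ^ β := by
      intro n
      set x := c0 / (n + 1 : ℝ) with hxdef
      have hn : (0:ℝ) < (n:ℝ) + 1 := by positivity
      have hxne : x ≠ 0 := div_ne_zero hc0ne hn.ne'
      have hxabs : |x| = |c0| * (1/(n+1)) := by
        rw [hxdef, abs_div, abs_of_pos hn, div_eq_mul_one_div]
      have hxpos : 0 < |x| := abs_pos.2 hxne
      have h1 : |f' 0| * |x| ≤ |f x| + CH * |x| ^ β * |x| := by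
        have := hEst x (hc0I n)
        have h2 : |f' 0 * x| ≤ |f x| + |f x - f' 0 * x| := by
          calc |f' 0 * x| = |f x - (f x - f' 0 * x)| := by congr 1; ring
            _ ≤ |f x| + |f x - f' 0 * x| := abs_sub (f x) (f x - f' 0 * x)
        rw [abs_mul] at h2
        linarith [hEst x (hc0I n)]
      have h3 : |f x| ≤ C₀ * |x| ^ β₀ := hC₀ x (hc0I n)
      have h4 : |f' 0| * |x| ≤ C₀ * |x| ^ β₀ + CH * |x| ^ β * |x| := by linarith
      have h5 : |x| ^ β₀ = |x| ^ (β₀ - 1) * |x| := by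
        rw [← Real.rpow_add_one hxpos.ne' (β₀ - 1)]; ring_nf
      rw [h5] at h4
      have h6 : |f' 0| ≤ C₀ * |x| ^ (β₀ - 1) + CH * |x| ^ β := by
        have := (mul_le_mul_iff_of_pos_right hxpos).mp (by linarith : |f' 0| * |x| ≤ (C₀ * |x| ^ (β₀ - 1) + CH * |x| ^ β) * |x|)
        exact this
      rw [hxabs] at h6
      exact h6
    -- the RHS tends to 0
    have htend : Filter.Tendsto (fun n : ℕ => C₀ * (|c0| * (1/(n+1))) ^ (β₀ - 1) + CH * (|c0| * (1/(n+1))) ^ β)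
        Filter.atTop (nhds 0) := by
      have ht0 : Filter.Tendsto (fun n : ℕ => |c0| * (1/((n:ℝ)+1))) Filter.atTop (nhds 0) := by
        have := tendsto_one_div_add_atTop_nhds_zero_nat.const_mul |c0|
        simpa using this
      have hcont1 : ContinuousAt (fun t : ℝ => C₀ * t ^ (β₀ - 1) + CH * t ^ β) 0 := by
        have c1 := (Real.continuousAt_rpow_const 0 (β₀ - 1) (Or.inr (by linarith))).const_mul C₀
        have c2 := (Real.continuousAt_rpow_const 0 β (Or.inr hβpos.le)).const_mul CH
        exact c1.add c2
      have := hcont1.tendsto.comp ht0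
      simp only [Function.comp_def] at this
      rw [Real.zero_rpow (by linarith : β₀ - 1 ≠ 0), Real.zero_rpow hβpos.ne', mul_zero, mul_zero, add_zero] at this
      exact this
    have : |f' 0| ≤ 0 := ge_of_tendsto' htend hbound
    exact abs_eq_zero.mp (le_antisymm this (abs_nonneg _))
  -- derivative bound
  have hfd : ∀ t ∈ Set.Icc a b, |f' t| ≤ CH * |t| ^ β := by
    intro t ht
    have := hCH t ht 0 h0I
    simpa [hf'0] using this
  -- mean value estimate
  have hMVT : ∀ x ∈ Set.Icc a b, ∀ y ∈ Set.Icc a b,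
      |f x - f y| ≤ CH * (max |x| |y|) ^ β * |x - y| := by
    intro x hx y hy
    have hsub : Set.uIcc y x ⊆ Set.Icc a b := Set.uIcc_subset_Icc hy hx
    have habs : ∀ t ∈ Set.uIcc y x, |t| ≤ max |x| |y| := by
      intro t ht
      rw [Set.mem_uIcc] at ht
      rcases ht with ⟨h1, h2⟩ | ⟨h1, h2⟩
      · rcases le_total 0 t with h0 | h0
        · rw [abs_of_nonneg h0]; exact le_max_of_le_left (h2.trans (le_abs_self x))
        · rw [abs_of_nonpos h0]; exact le_max_of_le_right ((neg_le_neg h1).trans (neg_le_abs y))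
      · rcases le_total 0 t with h0 | h0
        · rw [abs_of_nonneg h0]; exact le_max_of_le_right (h2.trans (le_abs_self y))
        · rw [abs_of_nonpos h0]; exact le_max_of_le_left ((neg_le_neg h1).trans (neg_le_abs x))
    have hd : ∀ t ∈ Set.uIcc y x, HasDerivWithinAt f (f' t) (Set.uIcc y x) t :=
      fun t ht => (hderiv t (hsub ht)).mono hsub
    have hbd : ∀ t ∈ Set.uIcc y x, ‖f' t‖ ≤ CH * (max |x| |y|) ^ β := by
      intro t ht
      calc ‖f' t‖ ≤ CH * |t| ^ β := hfd t (hsub ht)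
        _ ≤ CH * (max |x| |y|) ^ β := mul_le_mul_of_nonneg_left
            (Real.rpow_le_rpow (abs_nonneg t) (habs t ht) hβpos.le) hCHpos.le
    have := (convex_uIcc y x).norm_image_sub_le_of_norm_hasDerivWithin_le hd hbd
      Set.left_mem_uIcc Set.right_mem_uIcc
    simpa [Real.norm_eq_abs] using this
  -- exponents and constants
  have hβ₀β : (0:ℝ) < β₀ - β := by linarith
  have h1le : (1:ℝ) ≤ β₀ - β := by linarith
  set bb : ℝ := (β₀ - β₁) / (β₀ - β) with hbbdef
  have hbbpos : 0 < bb := div_pos (by linarith) hβ₀β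
  have hbble1 : bb < 1 := by
    rw [hbbdef, div_lt_one hβ₀β]; linarith
  have heq1 : (β₀ - β) * (1 - bb) = β₁ - β := by
    rw [hbbdef]; field_simp; ring
  have heq2 : (β₀ - β) * bb = β₀ - β₁ := by
    rw [hbbdef]; field_simp
  have he1 : (0:ℝ) ≤ β₀ - β₁ - bb := by nlinarith [heq2]
  have he2 : (0:ℝ) ≤ β₀ - 1 - β := by linarith
  set R : ℝ := max (-a) b with hRdef
  have hR : ∀ x ∈ Set.Icc a b, |x| ≤ R := by
    intro x hx
    rw [abs_le]
    constructor
    · have : -a ≤ R := le_max_left _ _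
      linarith [hx.1]
    · exact hx.2.trans (le_max_right _ _)
  have hRpos : 0 < R := by
    rcases lt_or_ge 0 b with h | h
    · exact lt_of_lt_of_le h (le_max_right _ _)
    · have : a < 0 := by linarith
      exact lt_of_lt_of_le (by linarith : (0:ℝ) < -a) (le_max_left _ _)
  set M₁ : ℝ := max 1 ((4*R) ^ (β₀ - β₁ - bb)) with hM₁def
  set M₂ : ℝ := max 1 (R ^ (β₀ - 1 - β)) with hM₂def
  have hM₁pos : 0 < M₁ := lt_of_lt_of_le one_pos (le_max_left _ _)
  have hM₂pos : 0 < M₂ := lt_of_lt_of_le one_pos (le_max_left _ _)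
  set K : ℝ := 4*C₀*M₁ + (CH + C₀*β₁*M₂) + 2*C₀ + 1 with hKdef
  have hKpos : 0 < K := by
    have h1 : 0 < C₀*β₁*M₂ := by positivity
    have h2 : 0 < 4*C₀*M₁ := by positivity
    rw [hKdef]; linarith
  -- pointwise bound on h
  have habsh : ∀ z ∈ Set.Icc a b,
      |if z = 0 then (0:ℝ) else f z / |z| ^ β₁| ≤ C₀ * |z| ^ (β₀ - β₁) := by
    intro z hz
    by_cases hz0 : z = 0
    · subst hz0
      simp [Real.zero_rpow (show β₀ - β₁ ≠ 0 by linarith)]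
    · rw [if_neg hz0]
      have hza : 0 < |z| := abs_pos.2 hz0
      rw [abs_div, abs_of_nonneg (Real.rpow_nonneg (abs_nonneg z) β₁),
        div_le_iff₀ (Real.rpow_pos_of_pos hza β₁)]
      have hsplit : |z| ^ β₀ = |z| ^ (β₀ - β₁) * |z| ^ β₁ := by
        rw [← Real.rpow_add hza]; ring_nf
      rw [mul_assoc, ← hsplit]
      exact hC₀ z hz
  -- the key (WLOG) estimate
  have key : ∀ x ∈ Set.Icc a b, ∀ y ∈ Set.Icc a b, |y| ≤ |x| →
      |(if x = 0 then (0:ℝ) else f x / |x| ^ β₁) - (if y = 0 then (0:ℝ) else f y / |y| ^ β₁)|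
        ≤ K * |x - y| ^ bb := by
    intro x hxI y hyI hyx
    rcases eq_or_ne x y with rfl | hxy
    · simp only [sub_self, abs_zero]
      positivity
    have ht0 : 0 < |x - y| := abs_pos.2 (sub_ne_zero.2 hxy)
    have htbb : 0 < |x - y| ^ bb := Real.rpow_pos_of_pos ht0 bb
    have ht2R : |x - y| ≤ 2*R := by
      have h1 := hR x hxI
      have h2 := hR y hyI
      have := abs_sub x y
      linarith
    have hhx := habsh x hxI
    have hhy := habsh y hyI
    have hhy' : |if y = 0 then (0:ℝ) else f y / |y| ^ β₁| ≤ C₀ * |x| ^ (β₀ - β₁) :=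
      hhy.trans (mul_le_mul_of_nonneg_left
        (Real.rpow_le_rpow (abs_nonneg y) hyx (by linarith)) hC₀pos.le)
    have hboth : |(if x = 0 then (0:ℝ) else f x / |x| ^ β₁) -
        (if y = 0 then (0:ℝ) else f y / |y| ^ β₁)| ≤ 2*C₀ * |x| ^ (β₀ - β₁) := by
      have := abs_sub (if x = 0 then (0:ℝ) else f x / |x| ^ β₁)
        (if y = 0 then (0:ℝ) else f y / |y| ^ β₁)
      linarith
    rcases le_or_gt (|x|) (2 * |x - y|) with hcase | hcase
    · -- Case 1 : |x| ≤ 2|x-y|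
      have h1 : |x| ^ (β₀ - β₁) ≤ (2*|x - y|) ^ (β₀ - β₁) :=
        Real.rpow_le_rpow (abs_nonneg x) hcase (by linarith)
      have h2 : (2*|x - y|) ^ (β₀ - β₁) = (2*|x - y|) ^ bb * (2*|x - y|) ^ (β₀ - β₁ - bb) := by
        rw [← Real.rpow_add (by linarith : (0:ℝ) < 2*|x - y|)]; ring_nf
      have h3 : (2*|x - y|) ^ (β₀ - β₁ - bb) ≤ M₁ :=
        aux_pow_le_max _ (4*R) _ (by linarith) (by linarith) he1
      have h4 : (2*|x - y|) ^ bb ≤ 2 * |x - y| ^ bb := by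
        rw [Real.mul_rpow (by norm_num) ht0.le]
        have h2bb : (2:ℝ) ^ bb ≤ 2 := by
          calc (2:ℝ) ^ bb ≤ 2 ^ (1:ℝ) :=
                Real.rpow_le_rpow_of_exponent_le one_le_two hbble1.le
            _ = 2 := Real.rpow_one 2
        exact mul_le_mul_of_nonneg_right h2bb (Real.rpow_nonneg ht0.le bb)
      have h5 : (2*|x - y|) ^ bb * (2*|x - y|) ^ (β₀ - β₁ - bb) ≤ (2 * |x - y| ^ bb) * M₁ :=
        mul_le_mul h4 h3 (Real.rpow_nonneg (by linarith) _) (by positivity)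
      have h6 : 2*C₀ * |x| ^ (β₀ - β₁) ≤ 2*C₀ * ((2 * |x - y| ^ bb) * M₁) := by
        apply mul_le_mul_of_nonneg_left _ (by positivity : (0:ℝ) ≤ 2*C₀)
        calc |x| ^ (β₀ - β₁) ≤ (2*|x - y|) ^ (β₀ - β₁) := h1
          _ = (2*|x - y|) ^ bb * (2*|x - y|) ^ (β₀ - β₁ - bb) := h2
          _ ≤ (2 * |x - y| ^ bb) * M₁ := h5
      have h7 : 2*C₀ * ((2 * |x - y| ^ bb) * M₁) = 4*C₀*M₁ * |x - y| ^ bb := by ring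
      have h8 : 4*C₀*M₁ ≤ K := by
        have h9 : 0 < C₀*β₁*M₂ := by positivity
        rw [hKdef]; linarith
      calc |(if x = 0 then (0:ℝ) else f x / |x| ^ β₁) -
            (if y = 0 then (0:ℝ) else f y / |y| ^ β₁)|
          ≤ 2*C₀ * |x| ^ (β₀ - β₁) := hboth
        _ ≤ 4*C₀*M₁ * |x - y| ^ bb := by rw [← h7]; exact h6
        _ ≤ K * |x - y| ^ bb := mul_le_mul_of_nonneg_right h8 htbb.le
    · -- Case 2 : 2|x-y| < |x|
      have hr0 : 0 < |x| := lt_of_le_of_lt (by positivity) hcase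
      have hxne : x ≠ 0 := abs_pos.mp hr0
      have hsubabs : |x| - |y| ≤ |x - y| := abs_sub_abs_le_abs_sub x y
      have hy0 : 0 < |y| := by linarith
      have hyne : y ≠ 0 := abs_pos.mp hy0
      rw [if_neg hxne, if_neg hyne]
      rw [if_neg hxne, if_neg hyne] at hboth
      have hA : 0 < |x| ^ β₁ := Real.rpow_pos_of_pos hr0 β₁
      have hB : 0 < |y| ^ β₁ := Real.rpow_pos_of_pos hy0 β₁
      have hBA : |y| ^ β₁ ≤ |x| ^ β₁ := Real.rpow_le_rpow (abs_nonneg y) hyx (by linarith)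
      have hdecomp : f x / |x| ^ β₁ - f y / |y| ^ β₁ =
          (f x - f y) / |x| ^ β₁ +
          f y * ((|y| ^ β₁ - |x| ^ β₁) / (|x| ^ β₁ * |y| ^ β₁)) := by
        field_simp
        ring
      have hsplit0 : |(f x - f y) / |x| ^ β₁ +
            f y * ((|y| ^ β₁ - |x| ^ β₁) / (|x| ^ β₁ * |y| ^ β₁))|
          ≤ |f x - f y| / |x| ^ β₁ +
            |f y| * ((|x| ^ β₁ - |y| ^ β₁) / (|x| ^ β₁ * |y| ^ β₁)) := by
        calc |(f x - f y) / |x| ^ β₁ +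
              f y * ((|y| ^ β₁ - |x| ^ β₁) / (|x| ^ β₁ * |y| ^ β₁))|
            ≤ |(f x - f y) / |x| ^ β₁| +
              |f y * ((|y| ^ β₁ - |x| ^ β₁) / (|x| ^ β₁ * |y| ^ β₁))| := abs_add_le _ _
          _ = |f x - f y| / |x| ^ β₁ +
              |f y| * ((|x| ^ β₁ - |y| ^ β₁) / (|x| ^ β₁ * |y| ^ β₁)) := by
              rw [abs_div, abs_of_pos hA, abs_mul, abs_div, abs_of_pos (mul_pos hA hB),
                abs_of_nonpos (by linarith : |y| ^ β₁ - |x| ^ β₁ ≤ 0), neg_sub]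
      -- Term 1
      have hT1 : |f x - f y| / |x| ^ β₁ ≤ CH * |x| ^ (β - β₁) * |x - y| := by
        have hmax : max |x| |y| = |x| := max_eq_left hyx
        have h1 : |f x - f y| ≤ CH * |x| ^ β * |x - y| := by
          have := hMVT x hxI y hyI
          rwa [hmax] at this
        rw [div_le_iff₀ hA]
        calc |f x - f y| ≤ CH * |x| ^ β * |x - y| := h1
          _ = CH * |x| ^ (β - β₁) * |x - y| * |x| ^ β₁ := by
            rw [Real.rpow_sub hr0]
            field_simp
      -- Term 2
      have hT2 : |f y| * ((|x| ^ β₁ - |y| ^ β₁) / (|x| ^ β₁ * |y| ^ β₁))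
          ≤ C₀*β₁*M₂ * |x| ^ (β - β₁) * |x - y| := by
        have hfy : |f y| ≤ C₀ * |y| ^ β₁ * |x| ^ (β₀ - β₁) := by
          calc |f y| ≤ C₀ * |y| ^ β₀ := hC₀ y hyI
            _ = C₀ * (|y| ^ β₁ * |y| ^ (β₀ - β₁)) := by
                rw [← Real.rpow_add hy0]; ring_nf
            _ ≤ C₀ * (|y| ^ β₁ * |x| ^ (β₀ - β₁)) := by
                apply mul_le_mul_of_nonneg_left _ hC₀pos.le
                exact mul_le_mul_of_nonneg_left
                  (Real.rpow_le_rpow (abs_nonneg y) hyx (by linarith)) hB.le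
            _ = C₀ * |y| ^ β₁ * |x| ^ (β₀ - β₁) := by ring
        have hAB : |x| ^ β₁ - |y| ^ β₁ ≤ β₁ * |x| ^ (β₁ - 1) * |x - y| := by
          calc |x| ^ β₁ - |y| ^ β₁ ≤ β₁ * |x| ^ (β₁ - 1) * (|x| - |y|) :=
                aux_rpow_sub_rpow β₁ |y| |x| hβ₁.le hy0 hyx
            _ ≤ β₁ * |x| ^ (β₁ - 1) * |x - y| :=
                mul_le_mul_of_nonneg_left hsubabs (by positivity)
        have hABnn : 0 ≤ |x| ^ β₁ - |y| ^ β₁ := by linarith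
        calc |f y| * ((|x| ^ β₁ - |y| ^ β₁) / (|x| ^ β₁ * |y| ^ β₁))
            ≤ (C₀ * |y| ^ β₁ * |x| ^ (β₀ - β₁)) *
              ((β₁ * |x| ^ (β₁ - 1) * |x - y|) / (|x| ^ β₁ * |y| ^ β₁)) := by
              apply mul_le_mul hfy _ (div_nonneg hABnn (by positivity)) (by positivity)
              exact (div_le_div_iff_of_pos_right (by positivity : (0:ℝ) < |x| ^ β₁ * |y| ^ β₁)).2 hAB
          _ = C₀*β₁*|x - y| * (|x| ^ (β₀ - β₁) * |x| ^ (β₁ - 1) / |x| ^ β₁) := by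
              field_simp
          _ = C₀*β₁*|x - y| * |x| ^ (β₀ - β₁ - 1) := by
              rw [← Real.rpow_add hr0, ← Real.rpow_sub hr0]
              ring_nf
          _ = C₀*β₁*|x - y| * (|x| ^ (β - β₁) * |x| ^ (β₀ - 1 - β)) := by
              rw [← Real.rpow_add hr0]
              ring_nf
          _ ≤ C₀*β₁*|x - y| * (|x| ^ (β - β₁) * M₂) := by
              apply mul_le_mul_of_nonneg_left _ (by positivity)
              exact mul_le_mul_of_nonneg_left
                (aux_pow_le_max (|x|) R _ (abs_nonneg x) (hR x hxI) he2)
                (Real.rpow_nonneg (abs_nonneg x) _)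
          _ = C₀*β₁*M₂ * |x| ^ (β - β₁) * |x - y| := by ring
      -- combined case-2 bound
      have hTot : |f x / |x| ^ β₁ - f y / |y| ^ β₁|
          ≤ (CH + C₀*β₁*M₂) * (|x| ^ (β - β₁) * |x - y|) := by
        rw [hdecomp]
        calc |(f x - f y) / |x| ^ β₁ +
              f y * ((|y| ^ β₁ - |x| ^ β₁) / (|x| ^ β₁ * |y| ^ β₁))|
            ≤ |f x - f y| / |x| ^ β₁ +
              |f y| * ((|x| ^ β₁ - |y| ^ β₁) / (|x| ^ β₁ * |y| ^ β₁)) := hsplit0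
          _ ≤ CH * |x| ^ (β - β₁) * |x - y| + C₀*β₁*M₂ * |x| ^ (β - β₁) * |x - y| := by
              linarith
          _ = (CH + C₀*β₁*M₂) * (|x| ^ (β - β₁) * |x - y|) := by ring
      rcases le_or_gt (|x - y|) (|x| ^ (β₀ - β)) with hsub2 | hsub2
      · -- subcase 2a
        have hkey : |x| ^ (β - β₁) * |x - y| ≤ |x - y| ^ bb := by
          have ht1 : |x - y| = |x - y| ^ bb * |x - y| ^ (1 - bb) := by
            rw [← Real.rpow_add ht0]
            simp
          have ht2 : |x - y| ^ (1 - bb) ≤ (|x| ^ (β₀ - β)) ^ (1 - bb) :=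
            Real.rpow_le_rpow ht0.le hsub2 (by linarith)
          have ht3 : (|x| ^ (β₀ - β)) ^ (1 - bb) = |x| ^ (β₁ - β) := by
            rw [← Real.rpow_mul (abs_nonneg x), heq1]
          have ht4 : |x| ^ (β - β₁) * |x| ^ (β₁ - β) = 1 := by
            rw [← Real.rpow_add hr0]
            simp
          calc |x| ^ (β - β₁) * |x - y|
              = |x| ^ (β - β₁) * (|x - y| ^ bb * |x - y| ^ (1 - bb)) := by rw [← ht1]
            _ ≤ |x| ^ (β - β₁) * (|x - y| ^ bb * |x| ^ (β₁ - β)) := by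
                apply mul_le_mul_of_nonneg_left _ (Real.rpow_nonneg (abs_nonneg x) _)
                rw [ht3] at ht2
                exact mul_le_mul_of_nonneg_left ht2 htbb.le
            _ = (|x| ^ (β - β₁) * |x| ^ (β₁ - β)) * |x - y| ^ bb := by ring
            _ = |x - y| ^ bb := by rw [ht4, one_mul]
        have hKge : CH + C₀*β₁*M₂ ≤ K := by
          have h2 : 0 < 4*C₀*M₁ := by positivity
          rw [hKdef]; linarith
        calc |f x / |x| ^ β₁ - f y / |y| ^ β₁|
            ≤ (CH + C₀*β₁*M₂) * (|x| ^ (β - β₁) * |x - y|) := hTot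
          _ ≤ (CH + C₀*β₁*M₂) * |x - y| ^ bb := by
              apply mul_le_mul_of_nonneg_left hkey
              have : 0 < C₀*β₁*M₂ := by positivity
              linarith
          _ ≤ K * |x - y| ^ bb := mul_le_mul_of_nonneg_right hKge htbb.le
      · -- subcase 2b
        have hkey : |x| ^ (β₀ - β₁) ≤ |x - y| ^ bb := by
          have h1 : |x| ^ (β₀ - β₁) = (|x| ^ (β₀ - β)) ^ bb := by
            rw [← Real.rpow_mul (abs_nonneg x), heq2]
          rw [h1]
          exact Real.rpow_le_rpow (Real.rpow_nonneg (abs_nonneg x) _) hsub2.le hbbpos.le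
        have hKge : 2*C₀ ≤ K := by
          have h2 : 0 < 4*C₀*M₁ := by positivity
          have h3 : 0 < C₀*β₁*M₂ := by positivity
          rw [hKdef]; linarith
        calc |f x / |x| ^ β₁ - f y / |y| ^ β₁|
            ≤ 2*C₀ * |x| ^ (β₀ - β₁) := hboth
          _ ≤ 2*C₀ * |x - y| ^ bb := mul_le_mul_of_nonneg_left hkey (by positivity)
          _ ≤ K * |x - y| ^ bb := mul_le_mul_of_nonneg_right hKge htbb.le
  -- final assembly
  refine ⟨K, hKpos, ?_⟩
  intro x hx y hy
  rcases le_total (|y|) (|x|) with h | h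
  · exact key x hx y hy h
  · have := key y hy x hx h
    rw [abs_sub_comm, abs_sub_comm x y]
    exact this
end

section
/- Let I be a closed interval containing 0, let β ∈ (0,1), and let f : I → ℝ be Hölder continuous of exponent β on I with f(x) = O(|x|) as |x| → 0. Let 1/2 ≤ β_1 < 1 and define h(x) := f(x)/|x|^{β_1} for x ≠ 0 and h(0) := 0. Then h is Hölder continuous on I of exponent β̄ := β(1 − β_1); i.e., there is C > 0 with |h(x) − h(y)| ≤ C|x − y|^{β̄} for all x, y ∈ I. -/
set_option maxHeartbeats 1000000

open MeasureTheory Filter Asymptotics Topology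

lemma aux_add_rpow (u v p : ℝ) (hu : 0 ≤ u) (hv : 0 ≤ v) (hp : 0 ≤ p) (hp1 : p ≤ 1) :
    (u + v) ^ p ≤ u ^ p + v ^ p := by
  lift u to NNReal using hu
  lift v to NNReal using hv
  rw [← NNReal.coe_add, ← NNReal.coe_rpow, ← NNReal.coe_rpow, ← NNReal.coe_rpow,
    ← NNReal.coe_add, NNReal.coe_le_coe]
  exact NNReal.rpow_add_le_add_rpow u v hp hp1

lemma aux_sub_rpow (u v p : ℝ) (hv : 0 ≤ v) (hvu : v ≤ u) (hp : 0 ≤ p) (hp1 : p ≤ 1) :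
    u ^ p - v ^ p ≤ (u - v) ^ p := by
  have h := aux_add_rpow v (u - v) p hv (by linarith) hp hp1
  rw [add_sub_cancel] at h
  linarith

lemma aux_min_rpow (p q θ : ℝ) (hp : 0 ≤ p) (hq : 0 ≤ q) (hθ : 0 ≤ θ) (hθ1 : θ ≤ 1) :
    min p q ≤ p ^ θ * q ^ (1 - θ) := by
  have hm : 0 ≤ min p q := le_min hp hq
  have h1 : min p q = (min p q) ^ θ * (min p q) ^ (1 - θ) := by
    rw [← Real.rpow_add' hm (by norm_num), add_sub_cancel, Real.rpow_one]
  rw [h1]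
  exact mul_le_mul (Real.rpow_le_rpow hm (min_le_left _ _) hθ)
    (Real.rpow_le_rpow hm (min_le_right _ _) (by linarith))
    (Real.rpow_nonneg hm _) (Real.rpow_nonneg hp _)

lemma aux_rpow_le (t M p q : ℝ) (ht : 0 ≤ t) (htM : t ≤ M) (hq : 0 < q) (hqp : q ≤ p) :
    t ^ p ≤ M ^ (p - q) * t ^ q := by
  rcases eq_or_lt_of_le ht with h0 | h0
  · rw [← h0, Real.zero_rpow hq.ne', Real.zero_rpow (by linarith : p ≠ 0), mul_zero]
  · have h : t ^ p = t ^ (p - q) * t ^ q := by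
      rw [← Real.rpow_add h0]; ring_nf
    rw [h]
    exact mul_le_mul_of_nonneg_right
      (Real.rpow_le_rpow ht htM (by linarith)) (Real.rpow_nonneg ht _)

/-- Hölder continuity of `h(x) = f(x)/|x|^{β₁}` for `f ∈ C^{0,β}(I)`
with `f(x) = O(|x|)` at `0` and `1/2 ≤ β₁ < 1`, where `β̄ = β(1-β₁)`. -/
theorem holder_quotient_C0 (a b : ℝ) (ha : a ≤ 0) (hb : 0 ≤ b)
    (β β₁ : ℝ) (hβ : β ∈ Set.Ioo (0 : ℝ) 1) (hβ₁ : 1 / 2 ≤ β₁) (hβ₁' : β₁ < 1)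
    (f : ℝ → ℝ)
    (hholder : ∃ C > 0, ∀ x ∈ Set.Icc a b, ∀ y ∈ Set.Icc a b,
      |f x - f y| ≤ C * |x - y| ^ β)
    (hO : f =O[nhdsWithin 0 (Set.Icc a b)] fun x : ℝ => |x|) :
    ∃ C > 0, ∀ x ∈ Set.Icc a b, ∀ y ∈ Set.Icc a b,
      |(if x = 0 then 0 else f x / |x| ^ β₁) - (if y = 0 then 0 else f y / |y| ^ β₁)|
        ≤ C * |x - y| ^ (β * (1 - β₁)) := by
  obtain ⟨hβ0, hβ1⟩ := hβ
  obtain ⟨C, hCpos, hC⟩ := hholder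
  obtain ⟨c, hc⟩ := hO.bound
  rw [eventually_nhdsWithin_iff, Metric.eventually_nhds_iff] at hc
  obtain ⟨δ, hδ, hcb⟩ := hc
  have h0ab : (0:ℝ) ∈ Set.Icc a b := ⟨ha, hb⟩
  have hβ₁0 : (0:ℝ) < β₁ := lt_of_lt_of_le (by norm_num) hβ₁
  have hβb : 0 < β * (1 - β₁) := mul_pos hβ0 (by linarith)
  have hβble : β * (1 - β₁) ≤ 1 - β₁ := by nlinarith
  -- f 0 = 0
  have hf0 : f 0 = 0 := by
    have h := hcb (show dist (0:ℝ) 0 < δ by simpa using hδ) h0ab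
    simp only [Real.norm_eq_abs, abs_zero, mul_zero, abs_abs] at h
    exact abs_eq_zero.mp (le_antisymm h (abs_nonneg _))
  -- global linear bound
  set K : ℝ := max c (C * δ ^ (β - 1)) + 1 with hKdef
  have hKc : c ≤ K := by have := le_max_left c (C * δ ^ (β - 1)); linarith
  have hKδ : C * δ ^ (β - 1) ≤ K := by
    have := le_max_right c (C * δ ^ (β - 1)); linarith
  have hKpos : 0 < K :=
    lt_of_lt_of_le (mul_pos hCpos (Real.rpow_pos_of_pos hδ _)) hKδ
  have hKf : ∀ x ∈ Set.Icc a b, |f x| ≤ K * |x| := by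
    intro x hx
    rcases lt_or_ge (dist x 0) δ with hlt | hge
    · have h1 := hcb hlt hx
      simp only [Real.norm_eq_abs, abs_abs] at h1
      have h2 : c * |x| ≤ K * |x| := mul_le_mul_of_nonneg_right hKc (abs_nonneg x)
      linarith
    · have hxδ : δ ≤ |x| := by rwa [Real.dist_eq, sub_zero] at hge
      have hx0 : 0 < |x| := lt_of_lt_of_le hδ hxδ
      have h1 : |f x| ≤ C * |x| ^ β := by
        have h := hC x hx 0 h0ab
        simpa [hf0, sub_zero] using h
      have h2 : |x| ^ β = |x| ^ (β - 1) * |x| := by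
        rw [← Real.rpow_add_one hx0.ne']; ring_nf
      have h3 : |x| ^ (β - 1) ≤ δ ^ (β - 1) :=
        Real.rpow_le_rpow_of_nonpos hδ hxδ (by linarith)
      calc |f x| ≤ C * (|x| ^ (β - 1) * |x|) := by rw [← h2]; exact h1
        _ ≤ C * (δ ^ (β - 1) * |x|) := by
            exact mul_le_mul_of_nonneg_left
              (mul_le_mul_of_nonneg_right h3 (abs_nonneg x)) hCpos.le
        _ = (C * δ ^ (β - 1)) * |x| := by ring
        _ ≤ K * |x| := mul_le_mul_of_nonneg_right hKδ (abs_nonneg x)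
  -- constants
  set M : ℝ := max (max b (-a)) 1 with hMdef
  have hM1 : (1:ℝ) ≤ M := le_max_right _ _
  have hMpos : (0:ℝ) < M := lt_of_lt_of_le one_pos hM1
  have hMx : ∀ x ∈ Set.Icc a b, |x| ≤ M := by
    intro x hx
    rw [abs_le]
    constructor
    · have : -M ≤ a := by
        have h1 : -a ≤ max b (-a) := le_max_right _ _
        have h2 : max b (-a) ≤ M := le_max_left _ _
        linarith
      linarith [hx.1]
    · have : b ≤ M := le_trans (le_max_left _ _) (le_max_left _ _)
      linarith [hx.2]
  set D : ℝ := 2 * M with hDdef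
  have hD1 : (1:ℝ) ≤ D := by linarith
  have hDxy : ∀ x ∈ Set.Icc a b, ∀ y ∈ Set.Icc a b, |x - y| ≤ D := by
    intro x hx y hy
    calc |x - y| ≤ |x| + |y| := abs_sub _ _
      _ ≤ M + M := add_le_add (hMx x hx) (hMx y hy)
      _ = D := by rw [hDdef]; ring
  set A₀ : ℝ := K * M ^ ((1 - β₁) - β * (1 - β₁)) with hA₀def
  set A₁ : ℝ := C ^ (1 - β₁) * (2 * K) ^ β₁ with hA₁def
  set A₂ : ℝ := K * D ^ ((1 - β₁) - β * (1 - β₁)) with hA₂def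
  have hA₀pos : 0 < A₀ := mul_pos hKpos (Real.rpow_pos_of_pos hMpos _)
  have hA₁pos : 0 < A₁ :=
    mul_pos (Real.rpow_pos_of_pos hCpos _) (Real.rpow_pos_of_pos (by linarith) _)
  have hA₂pos : 0 < A₂ := mul_pos hKpos (Real.rpow_pos_of_pos (by linarith) _)
  have key : ∀ x ∈ Set.Icc a b, ∀ y ∈ Set.Icc a b, |y| ≤ |x| →
      |(if x = 0 then 0 else f x / |x| ^ β₁) - (if y = 0 then 0 else f y / |y| ^ β₁)|
        ≤ (A₀ + A₁ + A₂) * |x - y| ^ (β * (1 - β₁)) := by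
    intro x hx y hy hyx
    by_cases hx0 : x = 0
    · have hy0 : y = 0 := by
        rw [hx0, abs_zero] at hyx
        exact abs_eq_zero.mp (le_antisymm hyx (abs_nonneg _))
      subst hx0; subst hy0
      simp [Real.zero_rpow hβb.ne']
    · have hxa : 0 < |x| := abs_pos.mpr hx0
      have hX : 0 < |x| ^ β₁ := Real.rpow_pos_of_pos hxa β₁
      have hrnn : 0 ≤ |x - y| ^ (β * (1 - β₁)) := Real.rpow_nonneg (abs_nonneg _) _
      by_cases hy0 : y = 0
      · subst hy0
        rw [if_neg hx0, if_pos rfl, sub_zero, sub_zero]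
        rw [abs_div, abs_of_nonneg hX.le]
        have h1 : |f x| / |x| ^ β₁ ≤ K * |x| / |x| ^ β₁ := by
          gcongr
          exact hKf x hx
        have h2 : K * |x| / |x| ^ β₁ = K * |x| ^ (1 - β₁) := by
          rw [Real.rpow_sub hxa, Real.rpow_one, mul_div_assoc]
        have h3 : |x| ^ (1 - β₁) ≤ M ^ ((1 - β₁) - β * (1 - β₁)) * |x| ^ (β * (1 - β₁)) :=
          aux_rpow_le |x| M (1 - β₁) (β * (1 - β₁)) (abs_nonneg x) (hMx x hx) hβb hβble
        have h4 : K * |x| ^ (1 - β₁) ≤ A₀ * |x| ^ (β * (1 - β₁)) := by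
          calc K * |x| ^ (1 - β₁)
              ≤ K * (M ^ ((1 - β₁) - β * (1 - β₁)) * |x| ^ (β * (1 - β₁))) :=
                mul_le_mul_of_nonneg_left h3 hKpos.le
            _ = A₀ * |x| ^ (β * (1 - β₁)) := by rw [hA₀def]; ring
        have h5 : A₀ * |x| ^ (β * (1 - β₁)) ≤ (A₀ + A₁ + A₂) * |x| ^ (β * (1 - β₁)) :=
          mul_le_mul_of_nonneg_right (by linarith) (Real.rpow_nonneg (abs_nonneg _) _)
        calc |f x| / |x| ^ β₁ ≤ K * |x| / |x| ^ β₁ := h1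
          _ = K * |x| ^ (1 - β₁) := h2
          _ ≤ A₀ * |x| ^ (β * (1 - β₁)) := h4
          _ ≤ (A₀ + A₁ + A₂) * |x| ^ (β * (1 - β₁)) := h5
      · have hya : 0 < |y| := abs_pos.mpr hy0
        have hY : 0 < |y| ^ β₁ := Real.rpow_pos_of_pos hya β₁
        have hYX : |y| ^ β₁ ≤ |x| ^ β₁ :=
          Real.rpow_le_rpow (abs_nonneg y) hyx hβ₁0.le
        rw [if_neg hx0, if_neg hy0]
        have hdecomp : f x / |x| ^ β₁ - f y / |y| ^ β₁ =
            (f x - f y) / |x| ^ β₁ + f y * (|y| ^ β₁ - |x| ^ β₁) / (|x| ^ β₁ * |y| ^ β₁) := by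
          field_simp
          ring
        have habs : |f x / |x| ^ β₁ - f y / |y| ^ β₁| ≤
            |f x - f y| / |x| ^ β₁ +
              |f y| * (|x| ^ β₁ - |y| ^ β₁) / (|x| ^ β₁ * |y| ^ β₁) := by
          rw [hdecomp]
          refine (abs_add_le _ _).trans ?_
          rw [abs_div, abs_of_nonneg hX.le, abs_div, abs_mul,
            abs_of_nonneg (mul_pos hX hY).le, abs_sub_comm (|y| ^ β₁) (|x| ^ β₁),
            abs_of_nonneg (sub_nonneg.mpr hYX)]
        -- Term 1
        have t1a : |f x - f y| ≤ min (C * |x - y| ^ β) (2 * K * |x|) := by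
          refine le_min (hC x hx y hy) ?_
          have h1 := hKf x hx
          have h2 := hKf y hy
          have h3 : |f x - f y| ≤ |f x| + |f y| := abs_sub _ _
          have h4 : K * |y| ≤ K * |x| := mul_le_mul_of_nonneg_left hyx hKpos.le
          linarith
        have t1b : min (C * |x - y| ^ β) (2 * K * |x|) ≤
            (C * |x - y| ^ β) ^ (1 - β₁) * (2 * K * |x|) ^ β₁ := by
          have h := aux_min_rpow (C * |x - y| ^ β) (2 * K * |x|) (1 - β₁)
            (by positivity) (by positivity) (by linarith) (by linarith)
          rwa [sub_sub_cancel] at h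
        have t1c : (C * |x - y| ^ β) ^ (1 - β₁) * (2 * K * |x|) ^ β₁ =
            A₁ * |x - y| ^ (β * (1 - β₁)) * |x| ^ β₁ := by
          rw [Real.mul_rpow hCpos.le (Real.rpow_nonneg (abs_nonneg _) _),
            Real.mul_rpow (by linarith : (0:ℝ) ≤ 2 * K) (abs_nonneg x),
            ← Real.rpow_mul (abs_nonneg (x - y)), hA₁def]
          ring
        have t1 : |f x - f y| / |x| ^ β₁ ≤ A₁ * |x - y| ^ (β * (1 - β₁)) := by
          rw [div_le_iff₀ hX]
          calc |f x - f y| ≤ (C * |x - y| ^ β) ^ (1 - β₁) * (2 * K * |x|) ^ β₁ :=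
                t1a.trans t1b
            _ = A₁ * |x - y| ^ (β * (1 - β₁)) * |x| ^ β₁ := t1c
        -- Term 2
        have t2a : |x| ^ β₁ - |y| ^ β₁ ≤ min (|x - y| ^ β₁) (|x| ^ β₁) := by
          refine le_min ?_ (by linarith [hY.le])
          have h1 : |x| ^ β₁ - |y| ^ β₁ ≤ (|x| - |y|) ^ β₁ :=
            aux_sub_rpow |x| |y| β₁ (abs_nonneg y) hyx hβ₁0.le hβ₁'.le
          have h2 : (|x| - |y|) ^ β₁ ≤ |x - y| ^ β₁ :=
            Real.rpow_le_rpow (by linarith) (abs_sub_abs_le_abs_sub x y) hβ₁0.le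
          linarith
        have hs0 : 0 ≤ (1 - β₁) / β₁ := div_nonneg (by linarith) hβ₁0.le
        have hs1 : (1 - β₁) / β₁ ≤ 1 := (div_le_one hβ₁0).mpr (by linarith)
        have t2b : min (|x - y| ^ β₁) (|x| ^ β₁) ≤
            |x - y| ^ (1 - β₁) * |x| ^ (2 * β₁ - 1) := by
          have h := aux_min_rpow (|x - y| ^ β₁) (|x| ^ β₁) ((1 - β₁) / β₁)
            (Real.rpow_nonneg (abs_nonneg _) _) hX.le hs0 hs1
          have e1 : (|x - y| ^ β₁) ^ ((1 - β₁) / β₁) = |x - y| ^ (1 - β₁) := by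
            rw [← Real.rpow_mul (abs_nonneg _)]
            congr 1
            field_simp
          have e2 : (|x| ^ β₁) ^ (1 - (1 - β₁) / β₁) = |x| ^ (2 * β₁ - 1) := by
            rw [← Real.rpow_mul (abs_nonneg _)]
            congr 1
            field_simp
            ring
          rwa [e1, e2] at h
        have hy1 : |y| ^ (1 - β₁) * |y| ^ β₁ = |y| := by
          rw [← Real.rpow_add hya, sub_add_cancel, Real.rpow_one]
        have hx1 : |x| ^ (2 * β₁ - 1) * |x| ^ (1 - β₁) = |x| ^ β₁ := by
          rw [← Real.rpow_add hxa]
          congr 1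
          ring
        have hyx1 : |y| ^ (1 - β₁) ≤ |x| ^ (1 - β₁) :=
          Real.rpow_le_rpow (abs_nonneg y) hyx (by linarith)
        have t2main : |f y| * (|x| ^ β₁ - |y| ^ β₁) ≤
            K * |x - y| ^ (1 - β₁) * (|x| ^ β₁ * |y| ^ β₁) := by
          have step1 : |f y| * (|x| ^ β₁ - |y| ^ β₁) ≤
              (K * |y|) * (|x - y| ^ (1 - β₁) * |x| ^ (2 * β₁ - 1)) :=
            mul_le_mul (hKf y hy) (t2a.trans t2b)
              (by linarith [hYX]) (by positivity)
          have step2 : (K * |y|) * (|x - y| ^ (1 - β₁) * |x| ^ (2 * β₁ - 1)) =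
              K * |x - y| ^ (1 - β₁) *
                (|x| ^ (2 * β₁ - 1) * (|y| ^ (1 - β₁) * |y| ^ β₁)) := by
            rw [hy1]; ring
          have step3 : |x| ^ (2 * β₁ - 1) * (|y| ^ (1 - β₁) * |y| ^ β₁) ≤
              |x| ^ (2 * β₁ - 1) * (|x| ^ (1 - β₁) * |y| ^ β₁) := by
            refine mul_le_mul_of_nonneg_left ?_ (Real.rpow_nonneg (abs_nonneg _) _)
            exact mul_le_mul_of_nonneg_right hyx1 hY.le
          have step4 : |x| ^ (2 * β₁ - 1) * (|x| ^ (1 - β₁) * |y| ^ β₁) =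
              |x| ^ β₁ * |y| ^ β₁ := by
            rw [← mul_assoc, hx1]
          calc |f y| * (|x| ^ β₁ - |y| ^ β₁)
              ≤ (K * |y|) * (|x - y| ^ (1 - β₁) * |x| ^ (2 * β₁ - 1)) := step1
            _ = K * |x - y| ^ (1 - β₁) *
                (|x| ^ (2 * β₁ - 1) * (|y| ^ (1 - β₁) * |y| ^ β₁)) := step2
            _ ≤ K * |x - y| ^ (1 - β₁) *
                (|x| ^ (2 * β₁ - 1) * (|x| ^ (1 - β₁) * |y| ^ β₁)) := by
                refine mul_le_mul_of_nonneg_left step3 ?_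
                positivity
            _ = K * |x - y| ^ (1 - β₁) * (|x| ^ β₁ * |y| ^ β₁) := by rw [step4]
        have hKP : K * |x - y| ^ (1 - β₁) ≤ A₂ * |x - y| ^ (β * (1 - β₁)) := by
          have h := aux_rpow_le |x - y| D (1 - β₁) (β * (1 - β₁)) (abs_nonneg _)
            (hDxy x hx y hy) hβb hβble
          calc K * |x - y| ^ (1 - β₁)
              ≤ K * (D ^ ((1 - β₁) - β * (1 - β₁)) * |x - y| ^ (β * (1 - β₁))) :=
                mul_le_mul_of_nonneg_left h hKpos.le
            _ = A₂ * |x - y| ^ (β * (1 - β₁)) := by rw [hA₂def]; ring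
        have t2 : |f y| * (|x| ^ β₁ - |y| ^ β₁) / (|x| ^ β₁ * |y| ^ β₁) ≤
            A₂ * |x - y| ^ (β * (1 - β₁)) := by
          rw [div_le_iff₀ (mul_pos hX hY)]
          calc |f y| * (|x| ^ β₁ - |y| ^ β₁)
              ≤ K * |x - y| ^ (1 - β₁) * (|x| ^ β₁ * |y| ^ β₁) := t2main
            _ ≤ A₂ * |x - y| ^ (β * (1 - β₁)) * (|x| ^ β₁ * |y| ^ β₁) :=
                mul_le_mul_of_nonneg_right hKP (mul_pos hX hY).le
        calc |f x / |x| ^ β₁ - f y / |y| ^ β₁|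
            ≤ |f x - f y| / |x| ^ β₁ +
              |f y| * (|x| ^ β₁ - |y| ^ β₁) / (|x| ^ β₁ * |y| ^ β₁) := habs
          _ ≤ A₁ * |x - y| ^ (β * (1 - β₁)) + A₂ * |x - y| ^ (β * (1 - β₁)) :=
              add_le_add t1 t2
          _ = (A₁ + A₂) * |x - y| ^ (β * (1 - β₁)) := by ring
          _ ≤ (A₀ + A₁ + A₂) * |x - y| ^ (β * (1 - β₁)) :=
              mul_le_mul_of_nonneg_right (by linarith) hrnn
  refine ⟨A₀ + A₁ + A₂, by linarith, fun x hx y hy => ?_⟩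
  rcases le_total |y| |x| with h | h
  · exact key x hx y hy h
  · rw [abs_sub_comm, abs_sub_comm x y]
    exact key y hy x hx h
end

section
/- Let p : ℤ → ℝ be an admissible probability mass function of index α and let φ(θ) = Σ_{x∈ℤ} p(x)e^{iθx} be its (2π-periodic, real-valued) characteristic function. If α ∈ (1,2), then for every sufficiently small ε > 0, φ is continuously differentiable on ℝ and φ′ is Hölder continuous of exponent α − 1 − ε. If α = 1, then for every sufficiently small ε > 0, φ is Hölder continuous of exponent 1 − ε on ℝ. -/
open MeasureTheory Filter Asymptotics Topology

noncomputable def charFn (p : ℤ → ℝ) (θ : ℝ) : ℝ := ∑' x : ℤ, p x * Real.cos (θ * (x : ℝ))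

structure IsAdmissible (p : ℤ → ℝ) (α : ℝ) (R : Finset ℝ) (κα : ℝ) (κ : ℝ → ℝ) : Prop where
  nonneg : ∀ x, 0 ≤ p x
  hasSum_one : HasSum p 1
  symm : ∀ x, p (-x) = p x
  alpha_mem : α ∈ Set.Ioo (0 : ℝ) 2
  R_subset : ∀ β ∈ R, β ∈ Set.Ioo α (2 + α)
  kappa_pos : 0 < κα
  kappaR_ne : ∀ β ∈ R, κ β ≠ 0
  expansion : (fun θ : ℝ => charFn p θ - (1 - κα * |θ| ^ α + ∑ β ∈ R, κ β * |θ| ^ β))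
      =O[nhds 0] fun θ : ℝ => |θ| ^ (2 + α)

lemma abs_sin_sub_sin (a b : ℝ) : |Real.sin a - Real.sin b| ≤ min 2 |a - b| := by
  refine le_min ?_ ?_
  · have h1 := Real.abs_sin_le_one a
    have h2 := Real.abs_sin_le_one b
    calc |Real.sin a - Real.sin b| ≤ |Real.sin a| + |Real.sin b| := abs_sub _ _
      _ ≤ 2 := by linarith
  · rw [Real.sin_sub_sin]
    calc |2 * Real.sin ((a - b) / 2) * Real.cos ((a + b) / 2)|
        = 2 * |Real.sin ((a - b) / 2)| * |Real.cos ((a + b) / 2)| := by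
          rw [abs_mul, abs_mul]; norm_num
      _ ≤ 2 * |(a - b) / 2| * 1 := by
          have := Real.abs_sin_le_abs (x := (a - b) / 2)
          have := Real.abs_cos_le_one ((a + b) / 2)
          have h0 := abs_nonneg ((a-b)/2)
          nlinarith [abs_nonneg (Real.sin ((a-b)/2))]
      _ = |a - b| := by rw [abs_div]; norm_num; ring

lemma abs_cos_sub_cos (a b : ℝ) : |Real.cos a - Real.cos b| ≤ min 2 |a - b| := by
  refine le_min ?_ ?_
  · have h1 := Real.abs_cos_le_one a
    have h2 := Real.abs_cos_le_one b
    calc |Real.cos a - Real.cos b| ≤ |Real.cos a| + |Real.cos b| := abs_sub _ _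
      _ ≤ 2 := by linarith
  · rw [Real.cos_sub_cos]
    calc |-2 * Real.sin ((a + b) / 2) * Real.sin ((a - b) / 2)|
        = 2 * |Real.sin ((a + b) / 2)| * |Real.sin ((a - b) / 2)| := by
          rw [abs_mul, abs_mul]; norm_num
      _ ≤ 2 * 1 * |(a - b) / 2| := by
          have := Real.abs_sin_le_abs (x := (a - b) / 2)
          have := Real.abs_sin_le_one ((a + b) / 2)
          have h0 := abs_nonneg ((a-b)/2)
          nlinarith [abs_nonneg (Real.sin ((a+b)/2))]
      _ = |a - b| := by rw [abs_div]; norm_num; ring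

lemma min_two_le_rpow {t u : ℝ} (ht0 : 0 < t) (ht1 : t ≤ 1) (hu : 0 ≤ u) :
    min 2 u ≤ 2 ^ (1 - t) * u ^ t := by
  rcases le_total u 2 with h | h
  · rcases eq_or_lt_of_le hu with rfl | hu0
    · simp [Real.zero_rpow (ne_of_gt ht0)]
    · calc min 2 u ≤ u := min_le_right _ _
        _ = u ^ (1 - t) * u ^ t := by
            rw [← Real.rpow_add hu0]; norm_num
        _ ≤ 2 ^ (1 - t) * u ^ t := by
            have : u ^ (1-t) ≤ 2 ^ (1-t) := Real.rpow_le_rpow hu h (by linarith)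
            have ht : 0 ≤ u ^ t := Real.rpow_nonneg hu t
            nlinarith
  · calc min 2 u ≤ 2 := min_le_left _ _
      _ = 2 ^ (1 - t) * 2 ^ t := by rw [← Real.rpow_add (by norm_num : (0:ℝ) < 2)]; norm_num
      _ ≤ 2 ^ (1 - t) * u ^ t := by
          have : (2:ℝ) ^ t ≤ u ^ t := Real.rpow_le_rpow (by norm_num) h (le_of_lt ht0)
          have : (0:ℝ) ≤ 2 ^ (1-t) := Real.rpow_nonneg (by norm_num) _
          nlinarith

lemma summable_p_cos {p : ℤ → ℝ} (hs : Summable p) (hnn : ∀ x, 0 ≤ p x) (θ : ℝ) :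
    Summable (fun n : ℤ => p n * Real.cos (θ * (n : ℝ))) := by
  refine Summable.of_norm_bounded hs fun n => ?_
  rw [Real.norm_eq_abs, abs_mul, abs_of_nonneg (hnn n)]
  have h1 := Real.abs_cos_le_one (θ * (n:ℝ))
  nlinarith [hnn n, abs_nonneg (Real.cos (θ * (n:ℝ)))]

lemma hasSum_one_sub {p : ℤ → ℝ} {α : ℝ} {R : Finset ℝ} {κα : ℝ} {κ : ℝ → ℝ}
    (hp : IsAdmissible p α R κα κ) (θ : ℝ) :
    HasSum (fun n : ℤ => p n * (1 - Real.cos (θ * (n : ℝ)))) (1 - charFn p θ) := by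
  have h1 := hp.hasSum_one
  have h2 : HasSum (fun n : ℤ => p n * Real.cos (θ * (n : ℝ))) (charFn p θ) :=
    (summable_p_cos h1.summable hp.nonneg θ).hasSum
  simpa [mul_sub, mul_one] using h1.sub h2

lemma charFn_zero {p : ℤ → ℝ} {α : ℝ} {R : Finset ℝ} {κα : ℝ} {κ : ℝ → ℝ}
    (hp : IsAdmissible p α R κα κ) : charFn p 0 = 1 := by
  have h := hp.hasSum_one
  unfold charFn
  simp only [zero_mul, Real.cos_zero, mul_one]
  exact h.tsum_eq

lemma one_sub_charFn_le {p : ℤ → ℝ} {α : ℝ} {R : Finset ℝ} {κα : ℝ} {κ : ℝ → ℝ}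
    (hp : IsAdmissible p α R κα κ) :
    ∃ c > 0, ∃ δ : ℝ, 0 < δ ∧ δ ≤ 1 ∧ ∀ θ : ℝ, |θ| ≤ δ → 1 - charFn p θ ≤ c * |θ| ^ α := by
  obtain ⟨C, hC⟩ := hp.expansion.bound
  rw [Metric.eventually_nhds_iff] at hC
  obtain ⟨δ₀, hδ₀, hB⟩ := hC
  have hα0 : 0 < α := hp.alpha_mem.1
  have hκα := hp.kappa_pos
  set c : ℝ := κα + (∑ β ∈ R, |κ β|) + |C| + 1 with hc
  have hsum_nn : 0 ≤ ∑ β ∈ R, |κ β| := Finset.sum_nonneg fun β _ => abs_nonneg _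
  have hcpos : 0 < c := by positivity
  refine ⟨c, hcpos, min (δ₀ / 2) 1, by positivity, min_le_right _ _, fun θ hθ => ?_⟩
  rcases eq_or_ne θ 0 with rfl | hθ0
  · rw [charFn_zero hp]
    simp [Real.zero_rpow (ne_of_gt hα0)]
  · have hθabs : 0 < |θ| := abs_pos.2 hθ0
    have hθ1 : |θ| ≤ 1 := le_trans hθ (min_le_right _ _)
    have hθδ : dist θ 0 < δ₀ := by
      rw [Real.dist_eq, sub_zero]
      have : |θ| ≤ δ₀ / 2 := le_trans hθ (min_le_left _ _)
      linarith
    have hbd := hB hθδ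
    rw [Real.norm_eq_abs, Real.norm_eq_abs] at hbd
    have h4 : 0 ≤ |θ| ^ (2 + α) := Real.rpow_nonneg (abs_nonneg θ) _
    rw [abs_of_nonneg h4] at hbd
    have hrp : 0 ≤ |θ| ^ α := Real.rpow_nonneg (abs_nonneg θ) α
    have h2α : |θ| ^ (2 + α) ≤ |θ| ^ α :=
      Real.rpow_le_rpow_of_exponent_ge hθabs hθ1 (by linarith)
    have h6 : C * |θ| ^ (2 + α) ≤ |C| * |θ| ^ α :=
      le_trans (mul_le_mul_of_nonneg_right (le_abs_self C) h4)
        (mul_le_mul_of_nonneg_left h2α (abs_nonneg C))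
    have h7 : |charFn p θ - (1 - κα * |θ| ^ α + ∑ β ∈ R, κ β * |θ| ^ β)| ≤ |C| * |θ| ^ α :=
      hbd.trans h6
    have hterm : ∀ β ∈ R, -(|κ β| * |θ| ^ α) ≤ κ β * |θ| ^ β := by
      intro β hβ
      have hβα : α ≤ β := le_of_lt (hp.R_subset β hβ).1
      have h1 : |θ| ^ β ≤ |θ| ^ α := Real.rpow_le_rpow_of_exponent_ge hθabs hθ1 hβα
      have h2 : 0 ≤ |θ| ^ β := Real.rpow_nonneg (abs_nonneg θ) β
      have h3 := neg_abs_le (κ β)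
      nlinarith [abs_nonneg (κ β)]
    have hsum_ge : -((∑ β ∈ R, |κ β|) * |θ| ^ α) ≤ ∑ β ∈ R, κ β * |θ| ^ β := by
      rw [Finset.sum_mul, ← Finset.sum_neg_distrib]
      exact Finset.sum_le_sum hterm
    have h8 := neg_abs_le (charFn p θ - (1 - κα * |θ| ^ α + ∑ β ∈ R, κ β * |θ| ^ β))
    rw [hc]
    nlinarith

lemma moment_summable {p : ℤ → ℝ} {α : ℝ} {R : Finset ℝ} {κα : ℝ} {κ : ℝ → ℝ}
    (hp : IsAdmissible p α R κα κ) {γ : ℝ} (hγ0 : 0 < γ) (hγα : γ < α) :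
    Summable (fun n : ℤ => p n * |(n : ℝ)| ^ γ) := by
  obtain ⟨c, hc, δ, hδ0, hδ1, hbound⟩ := one_sub_charFn_le hp
  obtain ⟨K, hK⟩ := exists_pow_lt_of_lt_one hδ0 (by norm_num : (1/2 : ℝ) < 1)
  -- notation
  set ρ : ℝ := (2 : ℝ) ^ (γ - α) with hρ
  have hρ0 : 0 < ρ := Real.rpow_pos_of_pos (by norm_num) _
  have hρ1 : ρ < 1 := Real.rpow_lt_one_of_one_lt_of_neg (by norm_num) (by linarith)
  have hgeo : Summable (fun j : ℕ => ρ ^ j) := summable_geometric_of_lt_one hρ0.le hρ1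
  set B : ℝ := ((2:ℝ) ^ K) ^ γ + (3 * c * (2:ℝ) ^ γ) * (1 - ρ)⁻¹ with hB
  have hnn : ∀ n : ℤ, 0 ≤ p n * |(n : ℝ)| ^ γ := fun n =>
    mul_nonneg (hp.nonneg n) (Real.rpow_nonneg (abs_nonneg _) _)
  refine summable_of_sum_le (c := B) hnn fun u => ?_
  -- split
  rw [← Finset.sum_filter_add_sum_filter_not u (fun n => n.natAbs < 2 ^ K)]
  have hsmall : ∑ n ∈ u.filter (fun n => n.natAbs < 2 ^ K), p n * |(n:ℝ)| ^ γ
      ≤ ((2:ℝ) ^ K) ^ γ := by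
    have h1 : ∀ n ∈ u.filter (fun n => n.natAbs < 2 ^ K),
        p n * |(n:ℝ)| ^ γ ≤ ((2:ℝ) ^ K) ^ γ * p n := by
      intro n hn
      rw [Finset.mem_filter] at hn
      have h2 : |(n:ℝ)| ≤ (2:ℝ) ^ K := by
        have habs : |(n:ℝ)| = (n.natAbs : ℝ) := by simp [Nat.cast_natAbs]
        rw [habs]
        exact_mod_cast hn.2.le
      have h3 : |(n:ℝ)| ^ γ ≤ ((2:ℝ) ^ K) ^ γ :=
        Real.rpow_le_rpow (abs_nonneg _) h2 hγ0.le
      nlinarith [hp.nonneg n, Real.rpow_nonneg (abs_nonneg (n:ℝ)) γ, hp.nonneg n]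
    calc ∑ n ∈ u.filter (fun n => n.natAbs < 2 ^ K), p n * |(n:ℝ)| ^ γ
        ≤ ∑ n ∈ u.filter (fun n => n.natAbs < 2 ^ K), ((2:ℝ) ^ K) ^ γ * p n :=
          Finset.sum_le_sum h1
      _ = ((2:ℝ) ^ K) ^ γ * ∑ n ∈ u.filter (fun n => n.natAbs < 2 ^ K), p n := by
          rw [Finset.mul_sum]
      _ ≤ ((2:ℝ) ^ K) ^ γ * 1 := by
          have := sum_le_hasSum (u.filter (fun n => n.natAbs < 2 ^ K))
            (fun i _ => hp.nonneg i) hp.hasSum_one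
          have h0 : (0:ℝ) ≤ ((2:ℝ) ^ K) ^ γ := Real.rpow_nonneg (by positivity) _
          nlinarith
      _ = ((2:ℝ) ^ K) ^ γ := mul_one _
  have hbig : ∑ n ∈ u.filter (fun n => ¬ n.natAbs < 2 ^ K), p n * |(n:ℝ)| ^ γ
      ≤ (3 * c * (2:ℝ) ^ γ) * (1 - ρ)⁻¹ := by
    set ub := u.filter (fun n => ¬ n.natAbs < 2 ^ K) with hub
    set g : ℤ → ℕ := fun n => Nat.log 2 n.natAbs with hg
    set t := ub.image g with ht
    have hmaps : ∀ n ∈ ub, g n ∈ t := fun n hn => Finset.mem_image_of_mem g hn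
    rw [← Finset.sum_fiberwise_of_maps_to hmaps]
    -- bound each fiber
    have hfiber : ∀ j ∈ t, ∑ n ∈ ub.filter (fun n => g n = j), p n * |(n:ℝ)| ^ γ
        ≤ (3 * c * (2:ℝ) ^ γ) * ρ ^ j := by
      intro j hj
      obtain ⟨n₀, hn₀, hgn₀⟩ := Finset.mem_image.1 hj
      have hn₀K : 2 ^ K ≤ n₀.natAbs := by
        rw [hub, Finset.mem_filter] at hn₀; exact not_lt.1 hn₀.2
      have hn₀0 : n₀.natAbs ≠ 0 := by
        have : (0:ℕ) < 2 ^ K := pow_pos (by norm_num) K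
        omega
      have hKj : K ≤ j := by
        rw [← hgn₀]
        exact (Nat.le_log_iff_pow_le (by norm_num) hn₀0).2 hn₀K
      set θj : ℝ := (1/2 : ℝ) ^ j with hθj
      have hθj0 : 0 < θj := by positivity
      have hθjδ : |θj| ≤ δ := by
        rw [abs_of_pos hθj0]
        calc θj ≤ (1/2:ℝ) ^ K := pow_le_pow_of_le_one (by norm_num) (by norm_num) hKj
          _ ≤ δ := hK.le
      -- pointwise bound on the fiber
      have hpt : ∀ n ∈ ub.filter (fun n => g n = j),
          p n * |(n:ℝ)| ^ γ ≤ (3 * ((2:ℝ) ^ γ * ((2:ℝ)^j) ^ γ)) *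
            (p n * (1 - Real.cos (θj * (n:ℝ)))) := by
        intro n hn
        rw [Finset.mem_filter] at hn
        obtain ⟨hnub, hgnj⟩ := hn
        have hnK : 2 ^ K ≤ n.natAbs := by
          rw [hub, Finset.mem_filter] at hnub; exact not_lt.1 hnub.2
        have hn0 : n.natAbs ≠ 0 := by
          have : (0:ℕ) < 2 ^ K := pow_pos (by norm_num) K
          omega
        have h2j : 2 ^ j ≤ n.natAbs := hgnj ▸ Nat.pow_log_le_self 2 hn0
        have h2j' : n.natAbs < 2 ^ (j+1) := hgnj ▸ Nat.lt_pow_succ_log_self (by norm_num) _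
        have habs : |(n:ℝ)| = (n.natAbs : ℝ) := by
          simp [Nat.cast_natAbs]
        have hlow : (2:ℝ) ^ j ≤ |(n:ℝ)| := by
          rw [habs]; exact_mod_cast h2j
        have hhigh : |(n:ℝ)| ≤ (2:ℝ) ^ (j+1) := by
          rw [habs]; exact_mod_cast h2j'.le
        -- 1 ≤ |θj * n| ≤ 2
        have hprod : |θj * (n:ℝ)| = θj * |(n:ℝ)| := by
          rw [abs_mul, abs_of_pos hθj0]
        have hθ2 : θj * (2:ℝ)^j = 1 := by
          rw [hθj, div_pow, one_pow]
          field_simp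
        have h1le : 1 ≤ |θj * (n:ℝ)| := by
          rw [hprod, ← hθ2]
          exact mul_le_mul_of_nonneg_left hlow hθj0.le
        have hle2 : |θj * (n:ℝ)| ≤ 2 := by
          rw [hprod]
          calc θj * |(n:ℝ)| ≤ θj * (2:ℝ)^(j+1) := mul_le_mul_of_nonneg_left hhigh hθj0.le
            _ = 2 := by rw [pow_succ, ← mul_assoc, hθ2]; ring
        have hcosle : Real.cos (θj * (n:ℝ)) ≤ Real.cos 1 := by
          rw [← Real.cos_abs]
          exact Real.cos_le_cos_of_nonneg_of_le_pi (by norm_num) (by linarith [Real.pi_gt_three]) h1le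
        have hcos1 : Real.cos 1 ≤ 2/3 := Real.cos_one_le.trans (by norm_num)
        have honethird : (1:ℝ)/3 ≤ 1 - Real.cos (θj * (n:ℝ)) := by linarith
        have hrγ : |(n:ℝ)| ^ γ ≤ (2:ℝ) ^ γ * ((2:ℝ)^j) ^ γ := by
          calc |(n:ℝ)| ^ γ ≤ ((2:ℝ)^(j+1)) ^ γ :=
                Real.rpow_le_rpow (abs_nonneg _) hhigh hγ0.le
            _ = (2:ℝ) ^ γ * ((2:ℝ)^j) ^ γ := by
                rw [pow_succ, mul_comm ((2:ℝ)^j) 2, Real.mul_rpow (by norm_num) (by positivity)]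
        have hpn := hp.nonneg n
        have hA : (0:ℝ) ≤ (2:ℝ) ^ γ * ((2:ℝ)^j) ^ γ :=
          mul_nonneg (Real.rpow_nonneg (by norm_num) γ)
            (Real.rpow_nonneg (by positivity) γ)
        have hstep := mul_le_mul_of_nonneg_left hrγ hpn
        have hgood : 0 ≤ p n * (1 - Real.cos (θj * (n:ℝ)) - 1/3) :=
          mul_nonneg hpn (by linarith)
        nlinarith [mul_nonneg hA hgood]
      -- sum the fiber bound
      have hfsum : ∑ n ∈ ub.filter (fun n => g n = j), p n * (1 - Real.cos (θj * (n:ℝ)))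
          ≤ 1 - charFn p θj := by
        refine sum_le_hasSum _ (fun i _ => ?_) (hasSum_one_sub hp θj)
        have := Real.cos_le_one (θj * (i:ℝ))
        have := hp.nonneg i
        nlinarith
      have hφ : 1 - charFn p θj ≤ c * θj ^ α := by
        have := hbound θj hθjδ
        rwa [abs_of_pos hθj0] at this
      -- combine
      have hAnn : (0:ℝ) ≤ 3 * ((2:ℝ) ^ γ * ((2:ℝ)^j) ^ γ) := by positivity
      calc ∑ n ∈ ub.filter (fun n => g n = j), p n * |(n:ℝ)| ^ γ
          ≤ ∑ n ∈ ub.filter (fun n => g n = j),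
              (3 * ((2:ℝ) ^ γ * ((2:ℝ)^j) ^ γ)) * (p n * (1 - Real.cos (θj * (n:ℝ)))) :=
            Finset.sum_le_sum hpt
        _ = (3 * ((2:ℝ) ^ γ * ((2:ℝ)^j) ^ γ)) *
              ∑ n ∈ ub.filter (fun n => g n = j), p n * (1 - Real.cos (θj * (n:ℝ))) := by
            rw [Finset.mul_sum]
        _ ≤ (3 * ((2:ℝ) ^ γ * ((2:ℝ)^j) ^ γ)) * (c * θj ^ α) := by
            have h1 : ∑ n ∈ ub.filter (fun n => g n = j), p n * (1 - Real.cos (θj * (n:ℝ)))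
                ≤ c * θj ^ α := le_trans hfsum hφ
            exact mul_le_mul_of_nonneg_left h1 hAnn
        _ = (3 * c * (2:ℝ) ^ γ) * ρ ^ j := by
            have hkey : ((2:ℝ)^j) ^ γ * θj ^ α = ρ ^ j := by
              have e1 : θj = ((2:ℝ)^j)⁻¹ := by
                rw [hθj, div_pow, one_pow, one_div]
              rw [e1, ← Real.rpow_natCast (2:ℝ) j, ← Real.rpow_neg_one (((2:ℝ)^(j:ℝ)))]
              rw [← Real.rpow_mul (by norm_num), ← Real.rpow_mul (by norm_num),
                ← Real.rpow_mul (by norm_num), ← Real.rpow_add (by norm_num : (0:ℝ) < 2)]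
              rw [hρ, ← Real.rpow_natCast ((2:ℝ) ^ (γ - α)) j, ← Real.rpow_mul (by norm_num)]
              ring_nf
            linear_combination (3 * c * (2:ℝ) ^ γ) * hkey
    calc ∑ j ∈ t, ∑ n ∈ ub.filter (fun n => g n = j), p n * |(n:ℝ)| ^ γ
        ≤ ∑ j ∈ t, (3 * c * (2:ℝ) ^ γ) * ρ ^ j := Finset.sum_le_sum hfiber
      _ = (3 * c * (2:ℝ) ^ γ) * ∑ j ∈ t, ρ ^ j := by rw [Finset.mul_sum]
      _ ≤ (3 * c * (2:ℝ) ^ γ) * ∑' j : ℕ, ρ ^ j := by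
          have h1 : ∑ j ∈ t, ρ ^ j ≤ ∑' j : ℕ, ρ ^ j :=
            Summable.sum_le_tsum t (fun i _ => (pow_pos hρ0 i).le) hgeo
          have h2 : (0:ℝ) ≤ 3 * c * (2:ℝ) ^ γ := by positivity
          exact mul_le_mul_of_nonneg_left h1 h2
      _ = (3 * c * (2:ℝ) ^ γ) * (1 - ρ)⁻¹ := by
          rw [tsum_geometric_of_lt_one hρ0.le hρ1]
  rw [hB]
  exact add_le_add hsmall hbig

/-- smoothness of the characteristic function of an admissible law:
`φ ∈ C^{1,α-1-ε}` for `α ∈ (1,2)`, and `φ ∈ C^{0,1-ε}` for `α = 1`. -/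
theorem charFn_smoothness (α : ℝ) (p : ℤ → ℝ) (R : Finset ℝ) (κα : ℝ) (κ : ℝ → ℝ)
    (hp : IsAdmissible p α R κα κ) :
    (α ∈ Set.Ioo (1 : ℝ) 2 →
      ∃ ε₀ > 0, ∀ ε ∈ Set.Ioo (0 : ℝ) ε₀,
        ∃ φ' : ℝ → ℝ, (∀ θ : ℝ, HasDerivAt (charFn p) (φ' θ) θ) ∧ Continuous φ' ∧
          ∃ C > 0, ∀ x y : ℝ, |φ' x - φ' y| ≤ C * |x - y| ^ (α - 1 - ε)) ∧
    (α = 1 →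
      ∃ ε₀ > 0, ∀ ε ∈ Set.Ioo (0 : ℝ) ε₀,
        ∃ C > 0, ∀ x y : ℝ, |charFn p x - charFn p y| ≤ C * |x - y| ^ (1 - ε)) := by
  constructor
  · -- case α ∈ (1,2)
    rintro ⟨hα1, hα2⟩
    refine ⟨α - 1, by linarith, ?_⟩
    rintro ε ⟨hε0, hεlt⟩
    set t : ℝ := α - 1 - ε with htdef
    have ht0 : 0 < t := by simp only [htdef]; linarith
    have ht1 : t < 1 := by simp only [htdef]; linarith
    have hγα : 1 + t < α := by simp only [htdef]; linarith
    have hM : Summable (fun n : ℤ => p n * |(n:ℝ)| ^ (1 + t)) :=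
      moment_summable hp (by linarith) hγα
    set M : ℝ := ∑' n : ℤ, p n * |(n:ℝ)| ^ (1 + t) with hMdef
    have hM0 : 0 ≤ M := tsum_nonneg fun n =>
      mul_nonneg (hp.nonneg n) (Real.rpow_nonneg (abs_nonneg _) _)
    have hone_abs : ∀ n : ℤ, n ≠ 0 → (1:ℝ) ≤ |(n:ℝ)| := by
      intro n hn
      have habs : |(n:ℝ)| = (n.natAbs : ℝ) := by simp [Nat.cast_natAbs]
      rw [habs]
      have : 1 ≤ n.natAbs := by omega
      exact_mod_cast this
    -- summable bound for derivatives
    have hu_nn : ∀ n : ℤ, 0 ≤ p n * |(n:ℝ)| := fun n => mul_nonneg (hp.nonneg n) (abs_nonneg _)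
    have huval : ∀ n : ℤ, p n * |(n:ℝ)| ≤ p n + p n * |(n:ℝ)| ^ (1 + t) := by
      intro n
      rcases eq_or_ne n 0 with rfl | hn
      · simpa [Real.zero_rpow (ne_of_gt (by linarith : (0:ℝ) < 1 + t))] using hp.nonneg 0
      · have h1 : (1:ℝ) ≤ |(n:ℝ)| := hone_abs n hn
        have h3 : |(n:ℝ)| ^ (1:ℝ) ≤ |(n:ℝ)| ^ (1 + t) :=
          Real.rpow_le_rpow_of_exponent_le h1 (by linarith)
        rw [Real.rpow_one] at h3
        have h4 := mul_le_mul_of_nonneg_left h3 (hp.nonneg n)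
        linarith [hp.nonneg n]
    have hu_sum : Summable (fun n : ℤ => p n * |(n:ℝ)|) :=
      Summable.of_nonneg_of_le hu_nn huval (hp.hasSum_one.summable.add hM)
    -- the functions and their derivatives
    have hgderiv : ∀ (n : ℤ) (θ : ℝ),
        HasDerivAt (fun θ : ℝ => p n * Real.cos (θ * (n:ℝ)))
          (p n * (-Real.sin (θ * (n:ℝ)) * (n:ℝ))) θ := by
      intro n θ
      exact ((hasDerivAt_mul_const (n:ℝ)).cos).const_mul (p n)
    have hg'bd : ∀ (n : ℤ) (θ : ℝ),
        ‖p n * (-Real.sin (θ * (n:ℝ)) * (n:ℝ))‖ ≤ p n * |(n:ℝ)| := by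
      intro n θ
      rw [Real.norm_eq_abs, abs_mul, abs_of_nonneg (hp.nonneg n), abs_mul, abs_neg]
      have hs := Real.abs_sin_le_one (θ * (n:ℝ))
      nlinarith [mul_le_mul_of_nonneg_left
        (mul_le_mul_of_nonneg_right hs (abs_nonneg ((n:ℝ)))) (hp.nonneg n)]
    have hg0 : Summable (fun n : ℤ => p n * Real.cos ((0:ℝ) * (n:ℝ))) :=
      summable_p_cos hp.hasSum_one.summable hp.nonneg 0
    set φ' : ℝ → ℝ := fun θ => ∑' n : ℤ, p n * (-Real.sin (θ * (n:ℝ)) * (n:ℝ)) with hφ'def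
    have hderiv : ∀ θ : ℝ, HasDerivAt (charFn p) (φ' θ) θ := by
      intro θ
      exact hasDerivAt_tsum hu_sum hgderiv hg'bd hg0 θ
    -- summability of derivative terms
    have hsums : ∀ x : ℝ, Summable (fun n : ℤ => p n * (-Real.sin (x * (n:ℝ)) * (n:ℝ))) := by
      intro x
      exact Summable.of_norm_bounded hu_sum (fun n => hg'bd n x)
    -- pointwise Hölder bound
    have key : ∀ (n : ℤ) (x y : ℝ),
        |p n * (-Real.sin (x * (n:ℝ)) * (n:ℝ)) - p n * (-Real.sin (y * (n:ℝ)) * (n:ℝ))|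
          ≤ (2 ^ (1 - t) * |x - y| ^ t) * (p n * |(n:ℝ)| ^ (1 + t)) := by
      intro n x y
      have e : p n * (-Real.sin (x * (n:ℝ)) * (n:ℝ)) - p n * (-Real.sin (y * (n:ℝ)) * (n:ℝ))
          = p n * ((n:ℝ) * (Real.sin (y * (n:ℝ)) - Real.sin (x * (n:ℝ)))) := by ring
      rw [e, abs_mul, abs_mul, abs_of_nonneg (hp.nonneg n)]
      have h2 : |y * (n:ℝ) - x * (n:ℝ)| = |(n:ℝ)| * |x - y| := by
        rw [show y * (n:ℝ) - x * (n:ℝ) = (n:ℝ) * (y - x) by ring, abs_mul, abs_sub_comm]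
      have hs : |Real.sin (y * (n:ℝ)) - Real.sin (x * (n:ℝ))|
          ≤ 2 ^ (1 - t) * (|(n:ℝ)| * |x - y|) ^ t := by
        have h1 := abs_sin_sub_sin (y * (n:ℝ)) (x * (n:ℝ))
        rw [h2] at h1
        exact h1.trans (min_two_le_rpow ht0 ht1.le (by positivity))
      have h4 : (|(n:ℝ)| * |x - y|) ^ t = |(n:ℝ)| ^ t * |x - y| ^ t :=
        Real.mul_rpow (abs_nonneg _) (abs_nonneg _)
      have h5 : |(n:ℝ)| ^ ((1:ℝ) + t) = |(n:ℝ)| ^ (1:ℝ) * |(n:ℝ)| ^ t :=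
        Real.rpow_add' (abs_nonneg _) (by linarith)
      rw [Real.rpow_one] at h5
      calc p n * (|(n:ℝ)| * |Real.sin (y * (n:ℝ)) - Real.sin (x * (n:ℝ))|)
          ≤ p n * (|(n:ℝ)| * (2 ^ (1 - t) * (|(n:ℝ)| * |x - y|) ^ t)) := by
            have := mul_le_mul_of_nonneg_left hs (abs_nonneg ((n:ℝ)))
            exact mul_le_mul_of_nonneg_left this (hp.nonneg n)
        _ = (2 ^ (1 - t) * |x - y| ^ t) * (p n * |(n:ℝ)| ^ (1 + t)) := by
            rw [h4, h5]; ring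
    have hbound_sum : ∀ x y : ℝ,
        Summable (fun n : ℤ => (2 ^ (1 - t) * |x - y| ^ t) * (p n * |(n:ℝ)| ^ (1 + t))) :=
      fun x y => hM.mul_left _
    have hholder : ∀ x y : ℝ, |φ' x - φ' y| ≤ (2 ^ (1 - t) * (M + 1)) * |x - y| ^ t := by
      intro x y
      have hsub : φ' x - φ' y = ∑' n : ℤ,
          (p n * (-Real.sin (x * (n:ℝ)) * (n:ℝ)) - p n * (-Real.sin (y * (n:ℝ)) * (n:ℝ))) := by
        rw [hφ'def]
        exact (Summable.tsum_sub (hsums x) (hsums y)).symm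
      have habs_sum : Summable (fun n : ℤ =>
          |p n * (-Real.sin (x * (n:ℝ)) * (n:ℝ)) - p n * (-Real.sin (y * (n:ℝ)) * (n:ℝ))|) :=
        Summable.of_nonneg_of_le (fun n => abs_nonneg _) (fun n => key n x y) (hbound_sum x y)
      rw [hsub]
      have h1 : |∑' n : ℤ,
          (p n * (-Real.sin (x * (n:ℝ)) * (n:ℝ)) - p n * (-Real.sin (y * (n:ℝ)) * (n:ℝ)))|
          ≤ ∑' n : ℤ,
          |p n * (-Real.sin (x * (n:ℝ)) * (n:ℝ)) - p n * (-Real.sin (y * (n:ℝ)) * (n:ℝ))| := by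
        have := norm_tsum_le_tsum_norm (f := fun n : ℤ =>
          p n * (-Real.sin (x * (n:ℝ)) * (n:ℝ)) - p n * (-Real.sin (y * (n:ℝ)) * (n:ℝ)))
          (by simpa [Real.norm_eq_abs] using habs_sum)
        simpa [Real.norm_eq_abs] using this
      refine h1.trans ?_
      have h2 : ∑' n : ℤ,
          |p n * (-Real.sin (x * (n:ℝ)) * (n:ℝ)) - p n * (-Real.sin (y * (n:ℝ)) * (n:ℝ))|
          ≤ ∑' n : ℤ, (2 ^ (1 - t) * |x - y| ^ t) * (p n * |(n:ℝ)| ^ (1 + t)) :=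
        Summable.tsum_le_tsum (fun n => key n x y) habs_sum (hbound_sum x y)
      refine h2.trans ?_
      rw [tsum_mul_left, ← hMdef]
      have h3 : (0:ℝ) ≤ |x - y| ^ t := Real.rpow_nonneg (abs_nonneg _) _
      have h4 : (0:ℝ) ≤ (2:ℝ) ^ (1 - t) := Real.rpow_nonneg (by norm_num) _
      nlinarith
    -- continuity of φ'
    have hcont : Continuous φ' := by
      rw [continuous_iff_continuousAt]
      intro x
      rw [ContinuousAt, tendsto_iff_dist_tendsto_zero]
      have hb : ∀ y : ℝ, dist (φ' y) (φ' x) ≤ (2 ^ (1 - t) * (M + 1)) * |y - x| ^ t := by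
        intro y
        rw [Real.dist_eq]
        exact hholder y x
      refine squeeze_zero (fun y => dist_nonneg) hb ?_
      have h1 : Filter.Tendsto (fun y : ℝ => |y - x|) (nhds x) (nhds 0) := by
        have hc : Continuous (fun y : ℝ => |y - x|) :=
          (continuous_id.sub continuous_const).abs
        have := hc.tendsto x
        simpa using this
      have h2 : Filter.Tendsto (fun z : ℝ => z ^ t) (nhds 0) (nhds 0) := by
        have := (Real.continuousAt_rpow_const 0 t (Or.inr ht0.le)).tendsto
        simpa [Real.zero_rpow (ne_of_gt ht0)] using this
      have h3 := (h2.comp h1).const_mul (2 ^ (1 - t) * (M + 1))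
      simpa using h3
    refine ⟨φ', hderiv, hcont, 2 ^ (1 - t) * (M + 1), by positivity, ?_⟩
    intro x y
    exact hholder x y
  · -- case α = 1
    intro hα1
    refine ⟨1/2, by norm_num, ?_⟩
    rintro ε ⟨hε0, hεlt⟩
    set t : ℝ := 1 - ε with htdef
    have ht0 : 0 < t := by simp only [htdef]; linarith
    have ht1 : t < 1 := by simp only [htdef]; linarith
    have hM : Summable (fun n : ℤ => p n * |(n:ℝ)| ^ t) :=
      moment_summable hp ht0 (by rw [hα1]; exact ht1)
    set M : ℝ := ∑' n : ℤ, p n * |(n:ℝ)| ^ t with hMdef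
    have hM0 : 0 ≤ M := tsum_nonneg fun n =>
      mul_nonneg (hp.nonneg n) (Real.rpow_nonneg (abs_nonneg _) _)
    have hsums : ∀ x : ℝ, Summable (fun n : ℤ => p n * Real.cos (x * (n:ℝ))) :=
      summable_p_cos hp.hasSum_one.summable hp.nonneg
    have key : ∀ (n : ℤ) (x y : ℝ),
        |p n * Real.cos (x * (n:ℝ)) - p n * Real.cos (y * (n:ℝ))|
          ≤ (2 ^ (1 - t) * |x - y| ^ t) * (p n * |(n:ℝ)| ^ t) := by
      intro n x y
      have e : p n * Real.cos (x * (n:ℝ)) - p n * Real.cos (y * (n:ℝ))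
          = p n * (Real.cos (x * (n:ℝ)) - Real.cos (y * (n:ℝ))) := by ring
      rw [e, abs_mul, abs_of_nonneg (hp.nonneg n)]
      have h2 : |x * (n:ℝ) - y * (n:ℝ)| = |(n:ℝ)| * |x - y| := by
        rw [show x * (n:ℝ) - y * (n:ℝ) = (n:ℝ) * (x - y) by ring, abs_mul]
      have hs : |Real.cos (x * (n:ℝ)) - Real.cos (y * (n:ℝ))|
          ≤ 2 ^ (1 - t) * (|(n:ℝ)| * |x - y|) ^ t := by
        have h1 := abs_cos_sub_cos (x * (n:ℝ)) (y * (n:ℝ))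
        rw [h2] at h1
        exact h1.trans (min_two_le_rpow ht0 ht1.le (by positivity))
      have h4 : (|(n:ℝ)| * |x - y|) ^ t = |(n:ℝ)| ^ t * |x - y| ^ t :=
        Real.mul_rpow (abs_nonneg _) (abs_nonneg _)
      calc p n * |Real.cos (x * (n:ℝ)) - Real.cos (y * (n:ℝ))|
          ≤ p n * (2 ^ (1 - t) * (|(n:ℝ)| * |x - y|) ^ t) :=
            mul_le_mul_of_nonneg_left hs (hp.nonneg n)
        _ = (2 ^ (1 - t) * |x - y| ^ t) * (p n * |(n:ℝ)| ^ t) := by rw [h4]; ring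
    have hbound_sum : ∀ x y : ℝ,
        Summable (fun n : ℤ => (2 ^ (1 - t) * |x - y| ^ t) * (p n * |(n:ℝ)| ^ t)) :=
      fun x y => hM.mul_left _
    refine ⟨2 ^ (1 - t) * (M + 1), by positivity, ?_⟩
    intro x y
    have hsub : charFn p x - charFn p y = ∑' n : ℤ,
        (p n * Real.cos (x * (n:ℝ)) - p n * Real.cos (y * (n:ℝ))) :=
      (Summable.tsum_sub (hsums x) (hsums y)).symm
    have habs_sum : Summable (fun n : ℤ =>
        |p n * Real.cos (x * (n:ℝ)) - p n * Real.cos (y * (n:ℝ))|) :=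
      Summable.of_nonneg_of_le (fun n => abs_nonneg _) (fun n => key n x y) (hbound_sum x y)
    rw [hsub]
    have h1 : |∑' n : ℤ, (p n * Real.cos (x * (n:ℝ)) - p n * Real.cos (y * (n:ℝ)))|
        ≤ ∑' n : ℤ, |p n * Real.cos (x * (n:ℝ)) - p n * Real.cos (y * (n:ℝ))| := by
      have := norm_tsum_le_tsum_norm (f := fun n : ℤ =>
        p n * Real.cos (x * (n:ℝ)) - p n * Real.cos (y * (n:ℝ)))
        (by simpa [Real.norm_eq_abs] using habs_sum)
      simpa [Real.norm_eq_abs] using this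
    refine h1.trans ?_
    have h2 : ∑' n : ℤ, |p n * Real.cos (x * (n:ℝ)) - p n * Real.cos (y * (n:ℝ))|
        ≤ ∑' n : ℤ, (2 ^ (1 - t) * |x - y| ^ t) * (p n * |(n:ℝ)| ^ t) :=
      Summable.tsum_le_tsum (fun n => key n x y) habs_sum (hbound_sum x y)
    refine h2.trans ?_
    rw [tsum_mul_left, ← hMdef]
    have h3 : (0:ℝ) ≤ |x - y| ^ t := Real.rpow_nonneg (abs_nonneg _) _
    have h4 : (0:ℝ) ≤ (2:ℝ) ^ (1 - t) := Real.rpow_nonneg (by norm_num) _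
    nlinarith
end
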